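/- Let ξ be a polynomial of degree d over Z and k = ⌊(d+1)/2⌋. If there exist distinct integers b_0, …, b_{d−1} such that 0 < |ξ(b_i)| < k!/2^k for all 0 ≤ i ≤ d−1, then ξ is irreducible in Q[x]. -/

import Mathlib

open Polynomial Finset

-- gap lemma
lemma polya_gap (c : ℕ → ℤ) (N : ℕ) (hm : ∀ t, t < N → c t < c (t + 1)) :
    ∀ j i : ℕ, j ≤ i → i ≤ N → (i : ℤ) - j ≤ c i - c j := by
  intro j i hji hiN
  induction i, hji using Nat.le_induction with
  | base => simp
  | succ i hji ih =>
    have h1 : c i < c (i + 1) := hm i (by omega)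
    have := ih (by omega)
    push_cast
    omega

-- factorial/2^ monotone
lemma polya_fact_mono (k e : ℕ) (hk : 1 ≤ k) (hke : k ≤ e) :
    (k.factorial : ℚ) / 2 ^ k ≤ (e.factorial : ℚ) / 2 ^ e := by
  induction e, hke using Nat.le_induction with
  | base => exact le_refl _
  | succ e hke ih =>
    refine le_trans ih ?_
    rw [div_le_div_iff₀ (by positivity) (by positivity)]
    have h2 : 2 ≤ e + 1 := by omega
    have hf1 : (1:ℚ) ≤ (e.factorial : ℚ) := by
      exact_mod_cast Nat.one_le_iff_ne_zero.mpr (Nat.factorial_ne_zero e)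
    have : (e.factorial : ℚ) * 2 ≤ ((e+1).factorial : ℚ) := by
      rw [Nat.factorial_succ]
      push_cast
      nlinarith [mul_le_mul_of_nonneg_right (show (2:ℚ) ≤ (e:ℚ)+1 by exact_mod_cast h2) (le_trans zero_le_one hf1)]
    calc (e.factorial : ℚ) * 2 ^ (e+1) = ((e.factorial : ℚ) * 2) * 2 ^ e := by ring
    _ ≤ ((e+1).factorial : ℚ) * 2 ^ e := by nlinarith [pow_pos (by norm_num : (0:ℚ) < 2) e]

lemma polya_fact_prod_nat (i : ℕ) : ∏ j ∈ range i, (i - j) = i.factorial := by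
  rw [← Finset.prod_range_reflect]
  rw [← Finset.prod_range_add_one_eq_factorial i]
  apply Finset.prod_congr rfl
  intro j hj
  have := Finset.mem_range.1 hj
  omega

lemma polya_prod_bound (c : ℕ → ℤ) (e : ℕ) (hm : ∀ t, t < e → c t < c (t + 1))
    (i : ℕ) (hi : i ≤ e) :
    ((i.factorial : ℤ) * ((e - i).factorial : ℤ)) ≤ ∏ j ∈ (range (e + 1)).erase i, |c i - c j| := by
  have hset : (range (e + 1)).erase i = range i ∪ Ico (i + 1) (e + 1) := by
    ext a
    simp only [mem_erase, mem_range, mem_union, mem_Ico]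
    omega
  have hdisj : Disjoint (range i) (Ico (i + 1) (e + 1)) := by
    rw [Finset.disjoint_left]
    intro a ha hb
    simp only [mem_range] at ha
    simp only [mem_Ico] at hb
    omega
  rw [hset, Finset.prod_union hdisj]
  have h1 : (i.factorial : ℤ) ≤ ∏ j ∈ range i, |c i - c j| := by
    calc (i.factorial : ℤ) = ∏ j ∈ range i, ((i : ℤ) - j) := by
          rw [← polya_fact_prod_nat i]
          push_cast [Nat.cast_prod]
          apply Finset.prod_congr rfl
          intro j hj
          have := Finset.mem_range.1 hj
          push_cast [Nat.cast_sub (le_of_lt this)]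
          ring
      _ ≤ ∏ j ∈ range i, |c i - c j| := by
          apply Finset.prod_le_prod
          · intro j hj
            have := Finset.mem_range.1 hj
            have : (j : ℤ) < (i : ℤ) := by exact_mod_cast this
            omega
          · intro j hj
            have hji := Finset.mem_range.1 hj
            have := polya_gap c e hm j i (le_of_lt hji) hi
            exact le_trans this (le_abs_self _)
  have h2 : ((e - i).factorial : ℤ) ≤ ∏ j ∈ Ico (i + 1) (e + 1), |c i - c j| := by
    rw [Finset.prod_Ico_eq_prod_range]
    have hc : e + 1 - (i + 1) = e - i := by omega
    rw [hc]
    calc ((e - i).factorial : ℤ) = ∏ t ∈ range (e - i), ((t : ℤ) + 1) := by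
          rw [← Finset.prod_range_add_one_eq_factorial (e - i)]
          push_cast [Nat.cast_prod]
          rfl
      _ ≤ ∏ t ∈ range (e - i), |c i - c (i + 1 + t)| := by
          apply Finset.prod_le_prod
          · intro t ht; positivity
          · intro t ht
            have hti := Finset.mem_range.1 ht
            have hgap := polya_gap c e hm i (i + 1 + t) (by omega) (by omega)
            have : (t : ℤ) + 1 ≤ c (i + 1 + t) - c i := by
              refine le_trans ?_ hgap
              push_cast
              omega
            rw [abs_sub_comm]
            exact le_trans this (le_abs_self _)
  have hnn : (0 : ℤ) ≤ ∏ j ∈ Ico (i + 1) (e + 1), |c i - c j| := by positivity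
  exact mul_le_mul h1 h2 (by positivity) (le_trans (by positivity) h1)

lemma polya_key (h : ℤ[X]) (e : ℕ) (he1 : 1 ≤ e) (hdeg : h.natDegree = e)
    (c : ℕ → ℤ) (hm : ∀ t, t < e → c t < c (t + 1))
    (hv : ∀ i, i ≤ e → h.eval (c i) ≠ 0 ∧
      ((|h.eval (c i)| : ℤ) : ℚ) < (e.factorial : ℚ) / 2 ^ e) : False := by
  classical
  have hne : h ≠ 0 := by
    intro h0
    exact (hv 0 (by omega)).1 (by simp [h0])
  set v : ℕ → ℚ := fun j => (c j : ℚ) with hvdef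
  have hcs : ∀ j i : ℕ, j < i → i ≤ e → c j < c i := by
    intro j i hji hie
    have := polya_gap c e hm j i (le_of_lt hji) hie
    have : (j : ℤ) < (i : ℤ) := by exact_mod_cast hji
    omega
  have hvs : Set.InjOn v ↑(range (e + 1)) := by
    intro a ha b hb hab
    simp only [Finset.coe_range, Set.mem_Iio] at ha hb
    have hab2 : (c a : ℚ) = (c b : ℚ) := hab
    have hab' : c a = c b := by exact_mod_cast hab2
    rcases lt_trichotomy a b with hlt | heq | hgt
    · exact absurd hab' (ne_of_lt (hcs a b hlt (by omega)))
    · exact heq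
    · exact absurd hab'.symm (ne_of_lt (hcs b a hgt (by omega)))
  set H : ℚ[X] := h.map (Int.castRingHom ℚ) with hHdef
  have hH : H ≠ 0 := by
    simpa [hHdef] using (Polynomial.map_ne_zero_iff (f := Int.castRingHom ℚ)
      Int.cast_injective).mpr hne
  have hHdeg : H.natDegree = e := by
    rw [hHdef, Polynomial.natDegree_map_eq_of_injective Int.cast_injective, hdeg]
  have hdegH : H.degree < #(range (e + 1)) := by
    rw [Finset.card_range, Polynomial.degree_eq_natDegree hH, hHdeg]
    exact_mod_cast Nat.lt_succ_self e
  have hint := Lagrange.eq_interpolate (s := range (e + 1)) (v := v) hvs hdegH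
  have hcoeff := congrArg (fun p => Polynomial.coeff p e) hint
  simp only [Lagrange.interpolate_apply, Polynomial.finset_sum_coeff,
    Polynomial.coeff_C_mul] at hcoeff
  have hb : ∀ i ∈ range (e + 1), (Lagrange.basis (range (e + 1)) v i).coeff e =
      ∏ j ∈ (range (e + 1)).erase i, (v i - v j)⁻¹ := by
    intro i hi
    have hnd : (Lagrange.basis (range (e + 1)) v i).natDegree = e := by
      rw [Lagrange.natDegree_basis hvs hi, Finset.card_range]
      omega
    have hcl : (Lagrange.basis (range (e + 1)) v i).coeff e =
        (Lagrange.basis (range (e + 1)) v i).leadingCoeff := by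
      rw [Polynomial.leadingCoeff, hnd]
    rw [hcl]
    simp only [Lagrange.basis, Polynomial.leadingCoeff_prod]
    apply Finset.prod_congr rfl
    intro j hj
    simp only [Lagrange.basisDivisor, Polynomial.leadingCoeff_mul, Polynomial.leadingCoeff_C,
      (Polynomial.monic_X_sub_C (v j)).leadingCoeff, mul_one]
  rw [Finset.sum_congr rfl fun i hi => by rw [hb i hi]] at hcoeff
  have hlead : (1 : ℚ) ≤ |H.coeff e| := by
    rw [show e = H.natDegree from hHdeg.symm, Polynomial.coeff_natDegree, hHdef,
      Polynomial.leadingCoeff_map_of_injective Int.cast_injective]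
    have h1 : 1 ≤ |h.leadingCoeff| := Int.one_le_abs (Polynomial.leadingCoeff_ne_zero.mpr hne)
    calc (1 : ℚ) ≤ ((|h.leadingCoeff| : ℤ) : ℚ) := by exact_mod_cast h1
      _ = |((h.leadingCoeff : ℤ) : ℚ)| := by push_cast; ring
  have habs : |H.coeff e| ≤ ∑ i ∈ range (e + 1),
      |H.eval (v i)| * ∏ j ∈ (range (e + 1)).erase i, |v i - v j|⁻¹ := by
    rw [hcoeff]
    refine le_trans (Finset.abs_sum_le_sum_abs _ _) ?_
    apply Finset.sum_le_sum
    intro i hi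
    rw [abs_mul, Finset.abs_prod]
    apply le_of_eq
    congr 1
    exact Finset.prod_congr rfl fun j hj => abs_inv _
  have hterm : ∀ i ∈ range (e + 1),
      |H.eval (v i)| * ∏ j ∈ (range (e + 1)).erase i, |v i - v j|⁻¹ <
      (e.factorial : ℚ) / 2 ^ e * ((i.factorial : ℚ) * ((e - i).factorial : ℚ))⁻¹ := by
    intro i hi
    have hie : i ≤ e := by
      have := Finset.mem_range.1 hi; omega
    have heval : H.eval (v i) = ((h.eval (c i) : ℤ) : ℚ) := by
      rw [hHdef, Polynomial.eval_map]
      exact Polynomial.eval₂_at_apply (Int.castRingHom ℚ) (c i)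
    have hprodc : ∏ j ∈ (range (e + 1)).erase i, |v i - v j| =
        ((∏ j ∈ (range (e + 1)).erase i, |c i - c j| : ℤ) : ℚ) := by
      push_cast
      rfl
    have hfacpos : (0 : ℚ) < (i.factorial : ℚ) * ((e - i).factorial : ℚ) := by
      have := Nat.factorial_pos i
      have := Nat.factorial_pos (e - i)
      positivity
    have hlb : (i.factorial : ℚ) * ((e - i).factorial : ℚ) ≤
        ∏ j ∈ (range (e + 1)).erase i, |v i - v j| := by
      rw [hprodc]
      exact_mod_cast polya_prod_bound c e hm i hie
    have hinv : ∏ j ∈ (range (e + 1)).erase i, |v i - v j|⁻¹ ≤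
        ((i.factorial : ℚ) * ((e - i).factorial : ℚ))⁻¹ := by
      rw [Finset.prod_inv_distrib]
      exact inv_anti₀ hfacpos hlb
    have hA : |H.eval (v i)| < (e.factorial : ℚ) / 2 ^ e := by
      rw [heval]
      calc |((h.eval (c i) : ℤ) : ℚ)| = ((|h.eval (c i)| : ℤ) : ℚ) := by push_cast; ring
        _ < (e.factorial : ℚ) / 2 ^ e := (hv i hie).2
    calc |H.eval (v i)| * ∏ j ∈ (range (e + 1)).erase i, |v i - v j|⁻¹ ≤
        |H.eval (v i)| * ((i.factorial : ℚ) * ((e - i).factorial : ℚ))⁻¹ :=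
          mul_le_mul_of_nonneg_left hinv (abs_nonneg _)
      _ < (e.factorial : ℚ) / 2 ^ e * ((i.factorial : ℚ) * ((e - i).factorial : ℚ))⁻¹ :=
          mul_lt_mul_of_pos_right hA (inv_pos.mpr hfacpos)
  have hsum_eq : ∑ i ∈ range (e + 1),
      (e.factorial : ℚ) / 2 ^ e * ((i.factorial : ℚ) * ((e - i).factorial : ℚ))⁻¹ = 1 := by
    have hstep : ∀ i ∈ range (e + 1),
        (e.factorial : ℚ) / 2 ^ e * ((i.factorial : ℚ) * ((e - i).factorial : ℚ))⁻¹ =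
        (e.choose i : ℚ) / 2 ^ e := by
      intro i hi
      have hie : i ≤ e := by
        have := Finset.mem_range.1 hi; omega
      have hbin := Nat.choose_mul_factorial_mul_factorial hie
      have h2 : (0 : ℚ) < 2 ^ e := by positivity
      have hf1 : (i.factorial : ℚ) ≠ 0 := by exact_mod_cast (Nat.factorial_pos i).ne'
      have hf2 : ((e - i).factorial : ℚ) ≠ 0 := by exact_mod_cast (Nat.factorial_pos (e - i)).ne'
      field_simp
      push_cast [← hbin]
      ring
    rw [Finset.sum_congr rfl hstep, ← Finset.sum_div, ← Nat.cast_sum, Nat.sum_range_choose]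
    push_cast
    exact div_self (by positivity)
  have hfin := Finset.sum_lt_sum_of_nonempty (Finset.nonempty_range_add_one) hterm
  rw [hsum_eq] at hfin
  linarith [le_trans hlead habs]

lemma polya_no_factor (ξ : ℤ[X]) (d : ℕ) (hd : 0 < d)
    (b : Fin d → ℤ) (hb : Function.Injective b)
    (hval : ∀ i : Fin d, ξ.eval (b i) ≠ 0 ∧
      ((|ξ.eval (b i)| : ℤ) : ℚ) < (Nat.factorial ((d + 1) / 2) : ℚ) / 2 ^ ((d + 1) / 2))
    (w : ℤ[X]) (hdvd : w ∣ ξ) (helo : (d + 1) / 2 ≤ w.natDegree)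
    (hehi : w.natDegree ≤ d - 1) : False := by
  classical
  set e := w.natDegree with hedef
  set k := (d + 1) / 2 with hkdef
  have hk1 : 1 ≤ k := by omega
  have he1 : 1 ≤ e := le_trans hk1 helo
  set s : Finset ℤ := Finset.image b Finset.univ with hsdef
  have hcard : s.card = d := by
    rw [hsdef, Finset.card_image_of_injective _ hb, Finset.card_univ, Fintype.card_fin]
  set iso := s.orderIsoOfFin hcard with hisodef
  set c : ℕ → ℤ := fun t => (iso ⟨min t (d - 1), by omega⟩ : ℤ) with hcdef
  have hmono : ∀ t, t < e → c t < c (t + 1) := by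
    intro t ht
    have h1 : min t (d - 1) = t := by omega
    have h2 : min (t + 1) (d - 1) = t + 1 := by omega
    have hlt : (⟨min t (d - 1), by omega⟩ : Fin d) < ⟨min (t + 1) (d - 1), by omega⟩ := by
      simp only [Fin.mk_lt_mk, h1, h2]
      omega
    exact_mod_cast iso.strictMono hlt
  have hmem : ∀ j, j ≤ e → ∃ i : Fin d, b i = c j := by
    intro j hj
    have hmem' : c j ∈ s := (iso ⟨min j (d - 1), by omega⟩).2
    rw [hsdef] at hmem'
    simpa [Finset.mem_image] using hmem'
  apply polya_key w e he1 rfl c hmono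
  intro i hie
  obtain ⟨t, ht⟩ := hmem i hie
  rw [← ht]
  have hx := hval t
  have hwd : w.eval (b t) ∣ ξ.eval (b t) := Polynomial.eval_dvd hdvd
  constructor
  · intro h0
    rw [h0] at hwd
    exact hx.1 (zero_dvd_iff.mp hwd)
  · have hwne : w.eval (b t) ≠ 0 := by
      intro h0
      rw [h0] at hwd
      exact hx.1 (zero_dvd_iff.mp hwd)
    have habs : |w.eval (b t)| ≤ |ξ.eval (b t)| :=
      Int.le_of_dvd (abs_pos.mpr hx.1) ((abs_dvd _ _).mpr ((dvd_abs _ _).mpr hwd))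
    calc ((|w.eval (b t)| : ℤ) : ℚ) ≤ ((|ξ.eval (b t)| : ℤ) : ℚ) := by exact_mod_cast habs
      _ < (k.factorial : ℚ) / 2 ^ k := hx.2
      _ ≤ (e.factorial : ℚ) / 2 ^ e := polya_fact_mono k e hk1 helo

/-- Polya's irreducibility criterion: if a degree-`d` integer polynomial takes
nonzero values of absolute value less than `k!/2^k` (where `k = ⌊(d+1)/2⌋`)
at `d` distinct integers, then it is irreducible over `ℚ`. -/
theorem statement_3 (ξ : ℤ[X]) (d : ℕ) (hd : 0 < d) (hdeg : ξ.natDegree = d)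
    (b : Fin d → ℤ) (hb : Function.Injective b)
    (hval : ∀ i : Fin d, ξ.eval (b i) ≠ 0 ∧
      ((|ξ.eval (b i)| : ℤ) : ℚ) < (Nat.factorial ((d + 1) / 2) : ℚ) / 2 ^ ((d + 1) / 2)) :
    Irreducible (ξ.map (Int.castRingHom ℚ)) := by
  classical
  have hxine : ξ ≠ 0 := by
    intro h0
    exact (hval ⟨0, hd⟩).1 (by simp [h0])
  have hcne : ξ.content ≠ 0 := by rwa [Ne, Polynomial.content_eq_zero_iff]
  have hmapeq : ξ.map (Int.castRingHom ℚ) =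
      C ((ξ.content : ℤ) : ℚ) * ξ.primPart.map (Int.castRingHom ℚ) := by
    conv_lhs => rw [ξ.eq_C_content_mul_primPart]
    rw [Polynomial.map_mul, Polynomial.map_C]
    norm_num
  have hcQ : ((ξ.content : ℤ) : ℚ) ≠ 0 := by exact_mod_cast hcne
  have hassoc : Associated (ξ.primPart.map (Int.castRingHom ℚ)) (ξ.map (Int.castRingHom ℚ)) :=
    ⟨(Polynomial.isUnit_C.mpr (isUnit_iff_ne_zero.mpr hcQ)).unit, by
      rw [hmapeq]; simp [mul_comm]⟩
  refine hassoc.irreducible ?_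
  rw [← Polynomial.IsPrimitive.Int.irreducible_iff_irreducible_map_cast ξ.isPrimitive_primPart]
  constructor
  · intro hu
    have h0 := Polynomial.natDegree_eq_zero_of_isUnit hu
    rw [Polynomial.natDegree_primPart, hdeg] at h0
    omega
  · intro g h' hgh
    by_contra hcon
    push_neg at hcon
    obtain ⟨hgu, hhu⟩ := hcon
    have hpne : ξ.primPart ≠ 0 := ξ.primPart_ne_zero
    have hgne : g ≠ 0 := by
      rintro rfl
      rw [zero_mul] at hgh
      exact hpne hgh
    have hhne : h' ≠ 0 := by
      rintro rfl
      rw [mul_zero] at hgh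
      exact hpne hgh
    have hcont : g.content * h'.content = 1 := by
      have h1 := Polynomial.content_primPart ξ
      rw [hgh, Polynomial.content_mul] at h1
      exact h1
    have hgc : IsUnit g.content := IsUnit.of_mul_eq_one _ hcont
    have hhc : IsUnit h'.content := IsUnit.of_mul_eq_one _ (by rwa [mul_comm] at hcont)
    have hdegpos : ∀ q : ℤ[X], IsUnit q.content → ¬IsUnit q → 1 ≤ q.natDegree := by
      intro q hqc hqu
      by_contra hq0
      push_neg at hq0
      have h0 : q.natDegree = 0 := by omega
      have hqC : q = C (q.coeff 0) := Polynomial.eq_C_of_natDegree_eq_zero h0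
      rw [hqC, Polynomial.content_C] at hqc
      exact hqu (hqC ▸ Polynomial.isUnit_C.mpr ((normalize_associated (q.coeff 0)).isUnit hqc))
    have hg1 := hdegpos g hgc hgu
    have hh1 := hdegpos h' hhc hhu
    have hsum : g.natDegree + h'.natDegree = d := by
      have hmul := Polynomial.natDegree_mul hgne hhne
      rw [← hgh, Polynomial.natDegree_primPart, hdeg] at hmul
      omega
    have hpd : ξ.primPart ∣ ξ :=
      ⟨C ξ.content, by conv_lhs => rw [ξ.eq_C_content_mul_primPart]; rw [mul_comm]⟩
    rcases le_total g.natDegree h'.natDegree with hle | hle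
    · exact polya_no_factor ξ d hd b hb hval h'
        (dvd_trans ⟨g, by rw [hgh, mul_comm]⟩ hpd) (by omega) (by omega)
    · exact polya_no_factor ξ d hd b hb hval g
        (dvd_trans ⟨h', by rw [hgh]⟩ hpd) (by omega) (by omega)
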